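/- Given a continuous function κ : ℝ → ℝ, define φ(s) = ∫_{s₀}^s κ(u) du and γ(s) = (∫_{s₀}^s cos(φ(u)) du, ∫_{s₀}^s sin(φ(u)) du, 0). Then γ is a unit-speed planar curve, i.e., ‖γ'(s)‖ = 1 for all s, and γ'(s) = (cos φ(s), sin φ(s), 0). -/

import Mathlib

/-- Given continuous κ, with φ(s) = ∫_{s₀}^s κ and
γ(s) = (∫_{s₀}^s cos φ, ∫_{s₀}^s sin φ, 0), the curve γ is a unit-speed planar
curve with γ'(s) = (cos φ(s), sin φ(s), 0). -/
theorem natural_equation_planar_curve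
    (κ : ℝ → ℝ) (hκ : Continuous κ) (s₀ : ℝ)
    (φ : ℝ → ℝ) (hφ : ∀ s, φ s = ∫ u in s₀..s, κ u)
    (γ : ℝ → EuclideanSpace ℝ (Fin 3))
    (hγ : ∀ s, γ s =
      ![∫ u in s₀..s, Real.cos (φ u), ∫ u in s₀..s, Real.sin (φ u), 0]) :
    ∀ s : ℝ,
      deriv γ s = ![Real.cos (φ s), Real.sin (φ s), 0] ∧ ‖deriv γ s‖ = 1 := by
  intro s
  have hφc : Continuous φ := by
    have := intervalIntegral.continuous_primitive (μ := MeasureTheory.volume)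
      (fun a b => hκ.intervalIntegrable a b) s₀
    exact this.congr fun x => (hφ x).symm
  have hcos : Continuous fun u => Real.cos (φ u) := Real.continuous_cos.comp hφc
  have hsin : Continuous fun u => Real.sin (φ u) := Real.continuous_sin.comp hφc
  have h1 : HasDerivAt (fun s => ∫ u in s₀..s, Real.cos (φ u))
      (Real.cos (φ s)) s := (hcos.integral_hasStrictDerivAt s₀ s).hasDerivAt
  have h2 : HasDerivAt (fun s => ∫ u in s₀..s, Real.sin (φ u))
      (Real.sin (φ s)) s := (hsin.integral_hasStrictDerivAt s₀ s).hasDerivAt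
  have h0 : HasDerivAt (fun _ : ℝ => (0 : ℝ)) 0 s := hasDerivAt_const s 0
  have hpi : HasDerivAt (fun s => (![∫ u in s₀..s, Real.cos (φ u),
      ∫ u in s₀..s, Real.sin (φ u), 0] : Fin 3 → ℝ))
      (![Real.cos (φ s), Real.sin (φ s), 0]) s := by
    rw [hasDerivAt_pi]
    intro i
    fin_cases i
    · simpa using h1
    · simpa using h2
    · simpa using h0
  have hγd : HasDerivAt γ (WithLp.toLp 2 ![Real.cos (φ s), Real.sin (φ s), 0] :
      EuclideanSpace ℝ (Fin 3)) s := by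
    have e := (EuclideanSpace.equiv (Fin 3) ℝ)
    have : HasDerivAt (fun s => (EuclideanSpace.equiv (Fin 3) ℝ).symm
        (![∫ u in s₀..s, Real.cos (φ u), ∫ u in s₀..s, Real.sin (φ u), 0]))
        ((EuclideanSpace.equiv (Fin 3) ℝ).symm
          (![Real.cos (φ s), Real.sin (φ s), 0])) s :=
      ((EuclideanSpace.equiv (Fin 3) ℝ).symm.hasFDerivAt.comp_hasDerivAt s hpi)
    exact this.congr_of_eventuallyEq (show γ =ᶠ[nhds s] _ from
      Filter.Eventually.of_forall fun x => by rw [← WithLp.toLp_ofLp (x := γ x), hγ x]; rfl)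
  refine ⟨by simp [hγd.deriv], ?_⟩
  rw [hγd.deriv, EuclideanSpace.norm_eq]
  simp [Fin.sum_univ_three, sq_abs, Real.cos_sq_add_sin_sq]
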